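/- arXiv:1108.4463 — 3 statements merged into one kernel-verified Lean document; each statement's English description precedes it below -/
import Mathlib

section
/- The cubic polynomial F(x0,x1,x2,x3) = -2·x0·x1·x2 + x3·(x1² - x2²) is irreducible over the real numbers. -/
open MvPolynomial

private lemma mvX_prime {n : ℕ} (i : Fin (n + 1)) :
    Prime (X i : MvPolynomial (Fin (n + 1)) ℝ) := by
  have h0 : Prime (X 0 : MvPolynomial (Fin (n + 1)) ℝ) := by
    rw [← MulEquiv.prime_iff (e := (MvPolynomial.finSuccEquiv ℝ n).toMulEquiv)]
    have : (MvPolynomial.finSuccEquiv ℝ n).toMulEquiv (X 0) = Polynomial.X :=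
      finSuccEquiv_X_zero
    rw [this]
    exact Polynomial.prime_X
  have h1 := (MulEquiv.prime_iff (e := (MvPolynomial.renameEquiv ℝ (Equiv.swap (0 : Fin (n + 1)) i)).toMulEquiv)).mpr h0
  have h2 : (MvPolynomial.renameEquiv ℝ (Equiv.swap (0 : Fin (n + 1)) i)).toMulEquiv (X 0) = X i := by
    show rename (Equiv.swap (0 : Fin (n + 1)) i) (X 0) = X i
    simp [Equiv.swap_apply_left]
  rwa [h2] at h1

private lemma linear_irred {R : Type*} [CommRing R] [IsDomain R]
    {a b : R} (ha : a ≠ 0)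
    (hcop : ∀ d : R, d ∣ a → d ∣ b → IsUnit d) :
    Irreducible (Polynomial.C a * Polynomial.X + Polynomial.C b) := by
  have hdeg : (Polynomial.C a * Polynomial.X + Polynomial.C b).natDegree = 1 :=
    Polynomial.natDegree_linear ha
  have hne : (Polynomial.C a * Polynomial.X + Polynomial.C b) ≠ 0 := by
    intro h; rw [h] at hdeg; simp at hdeg
  constructor
  · intro h
    have := Polynomial.natDegree_eq_zero_of_isUnit h
    omega
  · intro s t hst
    have hs : s ≠ 0 := by rintro rfl; simp at hst; exact hne hst
    have ht : t ≠ 0 := by rintro rfl; simp at hst; exact hne hst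
    have hsum : s.natDegree + t.natDegree = 1 := by
      rw [← Polynomial.natDegree_mul hs ht, ← hst, hdeg]
    have key : ∀ u v : Polynomial R, (Polynomial.C a * Polynomial.X + Polynomial.C b) = u * v →
        u.natDegree = 0 → IsUnit u := by
      intro u v huv hu0
      obtain ⟨d, rfl⟩ := Polynomial.natDegree_eq_zero.mp hu0
      have hdvd : Polynomial.C d ∣ (Polynomial.C a * Polynomial.X + Polynomial.C b) :=
        ⟨v, huv⟩
      rw [Polynomial.C_dvd_iff_dvd_coeff] at hdvd
      have hda : d ∣ a := by have := hdvd 1; simpa using this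
      have hdb : d ∣ b := by have := hdvd 0; simpa using this
      exact Polynomial.isUnit_C.mpr (hcop d hda hdb)
    rcases Nat.eq_zero_or_pos s.natDegree with h | h
    · exact Or.inl (key s t hst h)
    · exact Or.inr (key t s (by rw [hst, mul_comm]) (by omega))

theorem lawson_cubic_irreducible :
    Irreducible
      ((-2 : MvPolynomial (Fin 4) ℝ) * X 0 * X 1 * X 2 + X 3 * (X 1 ^ 2 - X 2 ^ 2)) := by
  set a : MvPolynomial (Fin 3) ℝ := (-2 : MvPolynomial (Fin 3) ℝ) * X 0 * X 1 with ha_def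
  set b : MvPolynomial (Fin 3) ℝ := X 2 * (X 0 ^ 2 - X 1 ^ 2) with hb_def
  have ha : a ≠ 0 := by
    have h2 : (-2 : MvPolynomial (Fin 3) ℝ) ≠ 0 := by norm_num
    exact mul_ne_zero (mul_ne_zero h2 (X_ne_zero 0)) (X_ne_zero 1)
  have hX0b : ¬ (X 0 : MvPolynomial (Fin 3) ℝ) ∣ b := by
    rintro ⟨k, hk⟩
    have h2 := congrArg (aeval (fun j : Fin 3 => if j = 0 then 0 else X j :
      Fin 3 → MvPolynomial (Fin 3) ℝ)) hk
    simp only [hb_def, map_mul, map_sub, map_pow, aeval_X] at h2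
    norm_num at h2
    exact absurd h2 (by decide)
  have hX1b : ¬ (X 1 : MvPolynomial (Fin 3) ℝ) ∣ b := by
    rintro ⟨k, hk⟩
    have h2 := congrArg (aeval (fun j : Fin 3 => if j = 1 then 0 else X j :
      Fin 3 → MvPolynomial (Fin 3) ℝ)) hk
    simp only [hb_def, map_mul, map_sub, map_pow, aeval_X] at h2
    norm_num at h2
    exact absurd h2 (by decide)
  have hcop : ∀ d : MvPolynomial (Fin 3) ℝ, d ∣ a → d ∣ b → IsUnit d := by
    intro d hda hdb
    by_contra hu
    have hd0 : d ≠ 0 := by rintro rfl; exact ha (zero_dvd_iff.mp hda)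
    obtain ⟨p, hpirr, hpd⟩ := WfDvdMonoid.exists_irreducible_factor hu hd0
    have hp : Prime p := hpirr.prime
    have hpa : p ∣ (-2 : MvPolynomial (Fin 3) ℝ) * (X 0 * X 1) := by
      rw [← mul_assoc]; exact hpd.trans hda
    have hXdvd : (X 0 : MvPolynomial (Fin 3) ℝ) ∣ p ∨ (X 1 : MvPolynomial (Fin 3) ℝ) ∣ p := by
      rcases hp.2.2 _ _ hpa with h | h
      · exact absurd (isUnit_of_dvd_unit h (by
            have hC : (-2 : MvPolynomial (Fin 3) ℝ) = C (-2 : ℝ) := by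
              simp [map_neg, map_ofNat]
            rw [hC]
            exact IsUnit.map C.toMonoidHom (by norm_num : IsUnit (-2 : ℝ)) : IsUnit (-2 : MvPolynomial (Fin 3) ℝ)))
          hp.not_isUnit
      · rcases hp.2.2 _ _ h with h0 | h1
        · obtain ⟨c, hc⟩ := h0
          rcases (mvX_prime (0 : Fin 3)).irreducible.isUnit_or_isUnit hc with hc1 | hc1
          · exact absurd hc1 hp.not_isUnit
          · left
            obtain ⟨u, rfl⟩ := hc1
            exact ⟨↑u⁻¹, by rw [hc, mul_assoc, Units.mul_inv, mul_one]⟩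
        · obtain ⟨c, hc⟩ := h1
          rcases (mvX_prime (1 : Fin 3)).irreducible.isUnit_or_isUnit hc with hc1 | hc1
          · exact absurd hc1 hp.not_isUnit
          · right
            obtain ⟨u, rfl⟩ := hc1
            exact ⟨↑u⁻¹, by rw [hc, mul_assoc, Units.mul_inv, mul_one]⟩
    rcases hXdvd with h | h
    · exact hX0b ((h.trans hpd).trans hdb)
    · exact hX1b ((h.trans hpd).trans hdb)
  have key : Irreducible (Polynomial.C a * Polynomial.X + Polynomial.C b) :=
    linear_irred ha hcop
  have heq : (MvPolynomial.finSuccEquiv ℝ 3)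
      ((-2 : MvPolynomial (Fin 4) ℝ) * X 0 * X 1 * X 2 + X 3 * (X 1 ^ 2 - X 2 ^ 2)) =
      Polynomial.C a * Polynomial.X + Polynomial.C b := by
    have e1 : (X 1 : MvPolynomial (Fin 4) ℝ) = X (Fin.succ 0) := rfl
    have e2 : (X 2 : MvPolynomial (Fin 4) ℝ) = X (Fin.succ 1) := rfl
    have e3 : (X 3 : MvPolynomial (Fin 4) ℝ) = X (Fin.succ 2) := rfl
    rw [e1, e2, e3]
    simp only [map_add, map_mul, map_sub, map_pow, map_neg, map_ofNat,
      finSuccEquiv_X_zero, finSuccEquiv_X_succ, ha_def, hb_def,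
      Polynomial.C_mul, Polynomial.C_neg, Polynomial.C_sub, Polynomial.C_pow]
    ring
  exact (MulEquiv.irreducible_iff (MvPolynomial.finSuccEquiv ℝ 3).toMulEquiv).mp
    (by rw [show ((MvPolynomial.finSuccEquiv ℝ 3).toMulEquiv)
      ((-2 : MvPolynomial (Fin 4) ℝ) * X 0 * X 1 * X 2 + X 3 * (X 1 ^ 2 - X 2 ^ 2)) =
      Polynomial.C a * Polynomial.X + Polynomial.C b from heq]; exact key)
end

section
/- For F = -2·x0·x1·x2 + x3·(x1² - x2²) on ℝ⁴, the polynomial |∇F|²·ΔF − (∇F)ᵀ·H(F)·(∇F) is divisible by F in ℝ[x0,x1,x2,x3]. -/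
open MvPolynomial

set_option maxHeartbeats 2000000

private lemma pd2 (i : Fin 4) : pderiv i (2 : MvPolynomial (Fin 4) ℝ) = 0 := by
  rw [show (2 : MvPolynomial (Fin 4) ℝ) = C 2 from (map_ofNat C 2).symm]; exact pderiv_C

private lemma pd_simp {i j : Fin 4} (h : j ≠ i) :
    pderiv i (X j : MvPolynomial (Fin 4) ℝ) = 0 := pderiv_X_of_ne h

/-- For `F = -2·x0·x1·x2 + x3·(x1² - x2²)` on ℝ⁴, the polynomial
`|∇F|²·ΔF − (∇F)ᵀ·H(F)·(∇F)` is divisible by `F`. -/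
theorem lawson_cubic_minimal_surface_eq :
    ((-2 : MvPolynomial (Fin 4) ℝ) * X 0 * X 1 * X 2 + X 3 * (X 1 ^ 2 - X 2 ^ 2)) ∣
      (fun (F : MvPolynomial (Fin 4) ℝ) =>
        (∑ i : Fin 4, (pderiv i F) ^ 2) * (∑ i : Fin 4, pderiv i (pderiv i F))
          - ∑ i : Fin 4, ∑ j : Fin 4, (pderiv i F) * (pderiv i (pderiv j F)) * (pderiv j F))
        ((-2 : MvPolynomial (Fin 4) ℝ) * X 0 * X 1 * X 2 + X 3 * (X 1 ^ 2 - X 2 ^ 2)) := by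
  set F : MvPolynomial (Fin 4) ℝ :=
    (-2 : MvPolynomial (Fin 4) ℝ) * X 0 * X 1 * X 2 + X 3 * (X 1 ^ 2 - X 2 ^ 2) with hF
  have h0 : pderiv 0 F = -2 * (X 1 * X 2) := by
    rw [hF]
    simp [pd2, pderiv_mul, pderiv_pow, pderiv_X_self, pd_simp (by decide : (1:Fin 4) ≠ 0),
      pd_simp (by decide : (2:Fin 4) ≠ 0), pd_simp (by decide : (3:Fin 4) ≠ 0)]
    try ring
  have h1 : pderiv 1 F = -2 * (X 0 * X 2) + 2 * (X 3 * X 1) := by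
    rw [hF]
    simp [pd2, pderiv_mul, pderiv_pow, pderiv_X_self, pd_simp (by decide : (0:Fin 4) ≠ 1),
      pd_simp (by decide : (2:Fin 4) ≠ 1), pd_simp (by decide : (3:Fin 4) ≠ 1)]
    try ring
  have h2 : pderiv 2 F = -2 * (X 0 * X 1) + -2 * (X 3 * X 2) := by
    rw [hF]
    simp [pd2, pderiv_mul, pderiv_pow, pderiv_X_self, pd_simp (by decide : (0:Fin 4) ≠ 2),
      pd_simp (by decide : (1:Fin 4) ≠ 2), pd_simp (by decide : (3:Fin 4) ≠ 2)]
    try ring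
  have h3 : pderiv 3 F = X 1 ^ 2 - X 2 ^ 2 := by
    rw [hF]
    simp [pd2, pderiv_mul, pderiv_pow, pderiv_X_self, pd_simp (by decide : (0:Fin 4) ≠ 3),
      pd_simp (by decide : (1:Fin 4) ≠ 3), pd_simp (by decide : (2:Fin 4) ≠ 3)]
    try ring
  refine ⟨(-8 : MvPolynomial (Fin 4) ℝ) * (X 0 ^ 2 + X 1 ^ 2 + X 2 ^ 2 + X 3 ^ 2), ?_⟩
  show (∑ i : Fin 4, (pderiv i F) ^ 2) * (∑ i : Fin 4, pderiv i (pderiv i F))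
      - (∑ i : Fin 4, ∑ j : Fin 4, (pderiv i F) * (pderiv i (pderiv j F)) * (pderiv j F))
      = F * ((-8 : MvPolynomial (Fin 4) ℝ) * (X 0 ^ 2 + X 1 ^ 2 + X 2 ^ 2 + X 3 ^ 2))
  simp only [Fin.sum_univ_four, h0, h1, h2, h3]
  simp only [map_add, pderiv_mul, map_sub, pderiv_pow, map_neg, pd2, pderiv_C, pderiv_X_self,
    pd_simp (by decide : (1:Fin 4) ≠ 0), pd_simp (by decide : (2:Fin 4) ≠ 0),
    pd_simp (by decide : (3:Fin 4) ≠ 0), pd_simp (by decide : (0:Fin 4) ≠ 1),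
    pd_simp (by decide : (2:Fin 4) ≠ 1), pd_simp (by decide : (3:Fin 4) ≠ 1),
    pd_simp (by decide : (0:Fin 4) ≠ 2), pd_simp (by decide : (1:Fin 4) ≠ 2),
    pd_simp (by decide : (3:Fin 4) ≠ 2), pd_simp (by decide : (0:Fin 4) ≠ 3),
    pd_simp (by decide : (1:Fin 4) ≠ 3), pd_simp (by decide : (2:Fin 4) ≠ 3),
    mul_zero, zero_mul, add_zero, zero_add, mul_one, one_mul, sub_zero, zero_sub, neg_zero]
  rw [hF]
  ring
end

section
/- Up to real scalar multiple, the unique real homogeneous quadratic polynomial on ℝ⁴ vanishing identically on the Clifford torus (in suitable orthonormal coordinates) is F = x0·x3 - x1·x2. -/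
/-- Up to scalar, `x0·x3 - x1·x2` is the unique real quadratic form vanishing on the
Clifford torus (parametrized so that it is the zero set of `x0·x3 - x1·x2` in `S³`). -/
theorem unique_quadric_on_clifford_torus
    (a0 a1 a2 a3 b01 b02 b03 b12 b13 b23 : ℝ)
    (h : ∀ s t : ℝ,
      (fun x0 x1 x2 x3 : ℝ =>
        a0 * x0 ^ 2 + a1 * x1 ^ 2 + a2 * x2 ^ 2 + a3 * x3 ^ 2 +
          b01 * x0 * x1 + b02 * x0 * x2 + b03 * x0 * x3 +
          b12 * x1 * x2 + b13 * x1 * x3 + b23 * x2 * x3)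
        ((Real.cos s + Real.cos t) / 2) ((Real.sin t + Real.sin s) / 2)
        ((Real.sin t - Real.sin s) / 2) ((Real.cos s - Real.cos t) / 2) = 0) :
    ∃ lam : ℝ, ∀ x0 x1 x2 x3 : ℝ,
      a0 * x0 ^ 2 + a1 * x1 ^ 2 + a2 * x2 ^ 2 + a3 * x3 ^ 2 +
        b01 * x0 * x1 + b02 * x0 * x2 + b03 * x0 * x3 +
        b12 * x1 * x2 + b13 * x1 * x3 + b23 * x2 * x3
        = lam * (x0 * x3 - x1 * x2) := by
  have s2 : (Real.sqrt 2) ^ 2 = 2 := Real.sq_sqrt (by norm_num)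
  have h1 := h 0 0
  have h2 := h Real.pi 0
  have h3 := h (Real.pi/2) (Real.pi/2)
  have h4 := h (Real.pi/2) (-(Real.pi/2))
  have h5 := h (Real.pi/4) (Real.pi/4)
  have h6 := h (Real.pi/4) (-(Real.pi/4))
  have h7 := h (Real.pi/4) (Real.pi - Real.pi/4)
  have h8 := h (Real.pi - Real.pi/4) (-(Real.pi/4))
  have h9 := h (Real.pi/2) 0
  simp only [Real.cos_zero, Real.sin_zero, Real.cos_pi, Real.sin_pi,
    Real.cos_pi_div_two, Real.sin_pi_div_two, Real.cos_neg, Real.sin_neg,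
    Real.cos_pi_sub, Real.sin_pi_sub, Real.cos_pi_div_four, Real.sin_pi_div_four]
    at h1 h2 h3 h4 h5 h6 h7 h8 h9
  ring_nf at h1 h2 h3 h4 h5 h6 h7 h8 h9
  rw [s2] at h5 h6 h7 h8
  have ha0 : a0 = 0 := by linarith
  have ha3 : a3 = 0 := by linarith
  have ha1 : a1 = 0 := by linarith
  have ha2 : a2 = 0 := by linarith
  have hb01 : b01 = 0 := by linarith
  have hb02 : b02 = 0 := by linarith
  have hb13 : b13 = 0 := by linarith
  have hb23 : b23 = 0 := by linarith
  have hb12 : b12 = -b03 := by linarith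
  exact ⟨b03, fun x0 x1 x2 x3 => by
    rw [ha0, ha1, ha2, ha3, hb01, hb02, hb13, hb23, hb12]; ring⟩
end
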